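/- For any pair of coprime odd integers m₁, m₂, there exists a matrix [[a,b],[c,d]] in Γ(2) with a+b = m₁ and c+d = m₂. -/
import Mathlib


/-- For any pair of coprime odd integers `m₁, m₂` there is a matrix
`[[a,b],[c,d]] ∈ Γ(2)` with `a + b = m₁` and `c + d = m₂`. -/
theorem Gamma2_realizes_odd_coprime_pair (m₁ m₂ : ℤ)
    (h₁ : Odd m₁) (h₂ : Odd m₂) (hcop : IsCoprime m₁ m₂) :
    ∃ a b c d : ℤ, a * d - b * c = 1 ∧ Odd a ∧ Odd d ∧ Even b ∧ Even c ∧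
      a + b = m₁ ∧ c + d = m₂ := by
  obtain ⟨u, v, huv⟩ := hcop
  -- find U odd, V even with U*m₁ + V*m₂ = 1
  obtain ⟨U, V, hU, hV, hUV⟩ : ∃ U V : ℤ, Odd U ∧ Even V ∧ U * m₁ + V * m₂ = 1 := by
    rcases Int.even_or_odd u with hu | hu
    · refine ⟨u + m₂, v - m₁, hu.add_odd h₂, ?_, by linear_combination huv⟩
      have hvodd : Odd v := by
        have h : Odd (v * m₂) := by
          have hv : v * m₂ = 1 - u * m₁ := by linarith
          rw [hv]; exact odd_one.sub_even (hu.mul_right m₁)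
        exact (Int.odd_mul.mp h).1
      exact hvodd.sub_odd h₁
    · refine ⟨u, v, hu, ?_, huv⟩
      have h : Even (v * m₂) := by
        have hm : Odd (u * m₁) := hu.mul h₁
        have : v * m₂ = 1 - u * m₁ := by linarith
        rw [this]
        exact odd_one.sub_odd hm
      rcases Int.even_mul.mp h with h' | h'
      · exact h'
      · exact absurd h' (Int.not_even_iff_odd.mpr h₂)
  refine ⟨m₁ + V, -V, m₂ - U, U, by linear_combination hUV, h₁.add_even hV, hU,
    hV.neg, h₂.sub_odd hU, by ring, by ring⟩
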